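/- Let n ≥ 1, let D be an n-dimensional grid (product of n nontrivial finite chains), and let L be a finite distributive lattice of order dimension at most n containing D as a sublattice. Then there is a retraction L → D, i.e., a lattice homomorphism fixing D pointwise. -/

import Mathlib

/-- The order dimension of a poset: the least `n` such that it order-embeds into a
product of `n` chains. -/
noncomputable def orderDim (P : Type) [Preorder P] : ℕ :=
  sInf {n : ℕ | Nonempty (P ↪o (Fin n → ℕ))}

set_option linter.unusedSectionVars false
set_option linter.unusedVariables false

open Finset


open Finset

section Dilworth
variable {α : Type*} [PartialOrder α] [DecidableEq α]
open scoped Classical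

noncomputable def antichains (s : Finset α) : Finset (Finset α) :=
  s.powerset.filter (fun t : Finset α => IsAntichain (· ≤ ·) (t : Set α))

lemma antichains_nonempty (s : Finset α) : ((antichains s).image Finset.card).Nonempty := by
  refine ⟨0, Finset.mem_image.2 ⟨∅, Finset.mem_filter.2 ⟨by simp, by
    simp only [Finset.coe_empty]; exact Set.pairwise_empty _⟩, rfl⟩⟩

/-- The width of a finset: the largest size of an antichain inside it. -/
noncomputable def fwidth (s : Finset α) : ℕ :=
  ((antichains s).image Finset.card).max' (antichains_nonempty s)

lemma card_le_fwidth {s t : Finset α} (hts : t ⊆ s)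
    (ht : IsAntichain (· ≤ ·) (t : Set α)) : t.card ≤ fwidth s := by
  apply Finset.le_max'
  exact Finset.mem_image.2 ⟨t, Finset.mem_filter.2 ⟨Finset.mem_powerset.2 hts, ht⟩, rfl⟩

lemma exists_fwidth_antichain (s : Finset α) :
    ∃ t ⊆ s, IsAntichain (· ≤ ·) (t : Set α) ∧ t.card = fwidth s := by
  have h := Finset.max'_mem _ (antichains_nonempty s)
  obtain ⟨t, ht, hc⟩ := Finset.mem_image.1 h
  obtain ⟨h1, h2⟩ := Finset.mem_filter.1 ht
  exact ⟨t, Finset.mem_powerset.1 h1, h2, hc⟩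

lemma fwidth_mono {s u : Finset α} (h : s ⊆ u) : fwidth s ≤ fwidth u := by
  obtain ⟨t, hts, ha, hc⟩ := exists_fwidth_antichain s
  rw [← hc]; exact card_le_fwidth (hts.trans h) ha

/-- A nonempty finite chain has a greatest element. -/
lemma chain_exists_greatest {c : Finset α} (hne : c.Nonempty)
    (hc : IsChain (· ≤ ·) (c : Set α)) : ∃ m ∈ c, ∀ x ∈ c, x ≤ m := by
  obtain ⟨m, hm, hmax⟩ := c.exists_maximal hne
  refine ⟨m, hm, fun x hx => ?_⟩
  rcases eq_or_ne x m with rfl | hne2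
  · exact le_rfl
  rcases hc hx hm hne2 with h | h
  · exact h
  · exact absurd (lt_of_le_of_ne h (Ne.symm hne2)) (fun hlt => lt_irrefl _ (lt_of_lt_of_le hlt (hmax hx hlt.le)))

end Dilworth

section Dilworth2
variable {α : Type*} [PartialOrder α] [DecidableEq α]
open scoped Classical

theorem dilworth (s : Finset α) :
    ∃ C : Finset (Finset α), C.card ≤ fwidth s ∧
      (∀ c ∈ C, IsChain (· ≤ ·) (c : Set α) ∧ c ⊆ s) ∧
      (∀ x ∈ s, ∃ c ∈ C, x ∈ c) ∧ (C : Set (Finset α)).PairwiseDisjoint id := by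
  induction s using Finset.strongInduction with
  | _ s ih =>
  rcases s.eq_empty_or_nonempty with rfl | hs
  · exact ⟨∅, by simp, by simp, by simp, by simp⟩
  obtain ⟨a, ha, hamax⟩ := s.exists_maximal hs
  have : Nonempty α := ⟨a⟩
  set s' := s.erase a with hs'def
  have has' : a ∉ s' := Finset.notMem_erase a s
  have hs'sub : s' ⊆ s := Finset.erase_subset a s
  rcases s'.eq_empty_or_nonempty with h0 | hs'ne
  · -- s = {a}
    have hsa : s = {a} := by
      apply Finset.Subset.antisymm
      · intro x hx
        rcases eq_or_ne x a with rfl | hne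
        · simp
        · have hxe : x ∈ s' := Finset.mem_erase.2 ⟨hne, hx⟩
          rw [h0] at hxe
          exact absurd hxe (Finset.notMem_empty x)
      · simpa using ha
    have hw1 : 1 ≤ fwidth s := by
      have := card_le_fwidth (t := {a}) (by simpa [hsa]) (by
        simp only [Finset.coe_singleton]; exact Set.pairwise_singleton _ _)
      simpa using this
    refine ⟨{{a}}, by simpa using hw1, ?_, ?_, ?_⟩
    · intro c hc
      simp only [Finset.mem_singleton] at hc
      subst hc
      exact ⟨Set.Subsingleton.isChain (by simp), by simpa using ha⟩
    · intro x hx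
      rw [hsa] at hx
      simp only [Finset.mem_singleton] at hx
      exact ⟨{a}, by simp, by simp [hx]⟩
    · simp
  · -- main case
    obtain ⟨C, hCcard, hCchain, hCcover, hCdisj⟩ := ih s' (Finset.erase_ssubset ha)
    set k := fwidth s' with hkdef
    obtain ⟨t0, ht0s, ht0a, ht0c⟩ := exists_fwidth_antichain s'
    have hk1 : 1 ≤ k := by
      obtain ⟨x, hx⟩ := hs'ne
      have := card_le_fwidth (t := {x}) (by simpa using hx) (by
        simp only [Finset.coe_singleton]; exact Set.pairwise_singleton _ _)
      simpa using this
    have hks : k ≤ fwidth s := fwidth_mono hs'sub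
    -- C.card = k
    have hCk : C.card = k := by
      refine le_antisymm hCcard ?_
      choose! f hf1 hf2 using fun x (hx : x ∈ t0) => hCcover x (ht0s hx)
      rw [hkdef, ← ht0c]
      refine Finset.card_le_card_of_injOn f (fun x hx => hf1 x hx) ?_
      intro x hx y hy hfxy
      by_contra hne
      rcases (hCchain _ (hf1 x hx)).1 (hf2 x hx) (hfxy ▸ hf2 y hy) hne with h | h
      · exact ht0a hx hy hne h
      · exact ht0a hy hx (Ne.symm hne) h
    -- every k-antichain of s' meets every chain of C
    have hmeet : ∀ t : Finset α, t ⊆ s' → IsAntichain (· ≤ ·) (t : Set α) → t.card = k →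
        ∀ c ∈ C, ∃ x ∈ t, x ∈ c := by
      intro t hts hta htc c hc
      choose! f hf1 hf2 using fun x (hx : x ∈ t) => hCcover x (hts hx)
      have hinj : ∀ x₁ x₂ (h₁ : x₁ ∈ t) (h₂ : x₂ ∈ t), f x₁ = f x₂ → x₁ = x₂ := by
        intro x y hx hy hfxy
        by_contra hne
        rcases (hCchain _ (hf1 x hx)).1 (hf2 x hx) (hfxy ▸ hf2 y hy) hne with h | h
        · exact hta hx hy hne h
        · exact hta hy hx (Ne.symm hne) h
      have hcard : C.card ≤ t.card := by rw [hCk, htc]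
      obtain ⟨x, hx, hcx⟩ := Finset.surj_on_of_inj_on_of_card_le (fun x _ => f x)
        (fun x hx => hf1 x hx) hinj hcard c hc
      exact ⟨x, hx, hcx ▸ hf2 x hx⟩
    -- the maximal elements m c
    set M : Finset α → Finset α := fun c => c.filter (fun x => ∃ t : Finset α, t ⊆ s' ∧
        IsAntichain (· ≤ ·) (t : Set α) ∧ t.card = k ∧ x ∈ t) with hMdef
    have hMsub : ∀ c, M c ⊆ c := fun c => Finset.filter_subset _ c
    have hMne : ∀ c, c ∈ C → ∃ mm : α, mm ∈ M c ∧ ∀ x ∈ M c, x ≤ mm := by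
      intro c hc
      obtain ⟨x, hxt, hxc⟩ := hmeet t0 ht0s ht0a ht0c c hc
      have hne : (M c).Nonempty :=
        ⟨x, Finset.mem_filter.2 ⟨hxc, t0, ht0s, ht0a, ht0c, hxt⟩⟩
      obtain ⟨mm, h1, h2⟩ := chain_exists_greatest hne ((hCchain c hc).1.mono (by
        intro y hy
        exact Finset.mem_of_mem_filter y (by exact_mod_cast hy)))
      exact ⟨mm, h1, h2⟩
    choose! m hm1 hm2 using hMne
    have hmc : ∀ c ∈ C, m c ∈ c := fun c hc => Finset.mem_of_mem_filter _ (hm1 c hc)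
    have hms' : ∀ c ∈ C, m c ∈ s' := fun c hc => (hCchain c hc).2 (hmc c hc)
    by_cases hcase : ∃ c ∈ C, m c ≤ a
    · -- remove the chain K
      obtain ⟨c0, hc0, hm0a⟩ := hcase
      set K : Finset α := insert a (c0.filter (fun x => x ≤ m c0)) with hKdef
      have haK : a ∈ K := Finset.mem_insert_self a _
      have hKs : K ⊆ s := by
        intro x hx
        rcases Finset.mem_insert.1 hx with rfl | hx
        · exact ha
        · exact hs'sub ((hCchain c0 hc0).2 (Finset.mem_of_mem_filter x hx))
      have hKchain : IsChain (· ≤ ·) (K : Set α) := by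
        intro x hx y hy hne
        simp only [hKdef, Finset.coe_insert, Set.mem_insert_iff, Finset.mem_coe,
          Finset.mem_filter] at hx hy
        rcases hx with rfl | ⟨hxc, hxm⟩
        · rcases hy with rfl | ⟨hyc, hym⟩
          · exact absurd rfl hne
          · exact Or.inr (hym.trans hm0a)
        · rcases hy with rfl | ⟨hyc, hym⟩
          · exact Or.inl (hxm.trans hm0a)
          · exact (hCchain c0 hc0).1 hxc hyc hne
      set s'' := s \ K with hs''def
      have hss'' : s'' ⊂ s := by
        refine Finset.ssubset_iff_of_subset (Finset.sdiff_subset) |>.2 ⟨a, ha, by simp [hs''def, haK]⟩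
      obtain ⟨E, hE1, hE2, hE3, hE4⟩ := ih s'' hss''
      have hs''s' : s'' ⊆ s' := by
        intro x hx
        obtain ⟨hxs, hxK⟩ := Finset.mem_sdiff.1 hx
        exact Finset.mem_erase.2 ⟨fun h => hxK (h ▸ haK), hxs⟩
      have hwE : fwidth s'' + 1 ≤ k := by
        obtain ⟨t, hts, hta, htc⟩ := exists_fwidth_antichain s''
        have htk : t.card ≤ k := card_le_fwidth (hts.trans hs''s') hta
        rcases lt_or_eq_of_le htk with h | h
        · omega
        · exfalso
          obtain ⟨x, hxt, hxc⟩ := hmeet t (hts.trans hs''s') hta h c0 hc0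
          have hxM : x ∈ M c0 :=
            Finset.mem_filter.2 ⟨hxc, t, hts.trans hs''s', hta, h, hxt⟩
          have hxK : x ∈ K := Finset.mem_insert.2 (Or.inr
            (Finset.mem_filter.2 ⟨hxc, hm2 c0 hc0 x hxM⟩))
          exact (Finset.mem_sdiff.1 (hts hxt)).2 hxK
      refine ⟨insert K E, ?_, ?_, ?_, ?_⟩
      · calc (insert K E).card ≤ E.card + 1 := Finset.card_insert_le _ _
          _ ≤ fwidth s'' + 1 := by omega
          _ ≤ k := hwE
          _ ≤ fwidth s := hks
      · intro c hc
        rcases Finset.mem_insert.1 hc with rfl | hc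
        · exact ⟨hKchain, hKs⟩
        · exact ⟨(hE2 c hc).1, (hE2 c hc).2.trans (Finset.sdiff_subset)⟩
      · intro x hx
        by_cases hxK : x ∈ K
        · exact ⟨K, Finset.mem_insert_self _ _, hxK⟩
        · obtain ⟨c, hc, hxc⟩ := hE3 x (Finset.mem_sdiff.2 ⟨hx, hxK⟩)
          exact ⟨c, Finset.mem_insert_of_mem hc, hxc⟩
      · rw [Finset.coe_insert]
        refine hE4.insert ?_
        intro e he _
        rw [Finset.disjoint_left]
        intro x hxK hxe
        exact (Finset.mem_sdiff.1 ((hE2 e he).2 hxe)).2 hxK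
    · -- a is incomparable with all m c : bigger antichain
      push_neg at hcase
      set A : Finset α := C.image m with hAdef
      have hAs' : A ⊆ s' := by
        intro x hx
        obtain ⟨c, hc, rfl⟩ := Finset.mem_image.1 hx
        exact hms' c hc
      have haA : a ∉ A := fun h => has' (hAs' h)
      have hmdisj : ∀ c ∈ C, ∀ c' ∈ C, m c = m c' → c = c' := by
        intro c hc c' hc' hmm
        by_contra hne
        have := hCdisj hc hc' hne
        rw [Function.onFun, disjoint_left] at this
        exact this (hmc c hc) (hmm ▸ hmc c' hc')
      have hAcard : A.card = k := by
        rw [hAdef, ← hCk]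
        apply Finset.card_image_of_injOn
        intro c hc c' hc' hmm
        exact hmdisj c hc c' hc' hmm
      have hAanti : IsAntichain (· ≤ ·) (A : Set α) := by
        intro x hx y hy hne hle
        obtain ⟨c, hc, rfl⟩ := Finset.mem_image.1 (by exact_mod_cast hx : x ∈ A)
        obtain ⟨c', hc', rfl⟩ := Finset.mem_image.1 (by exact_mod_cast hy : y ∈ A)
        have hcc' : c ≠ c' := fun h => hne (by rw [h])
        obtain ⟨t', ht's, ht'a, ht'c, hyt'⟩ := (Finset.mem_filter.1 (hm1 c' hc')).2
        obtain ⟨z, hzt', hzc⟩ := hmeet t' ht's ht'a ht'c c hc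
        have hzM : z ∈ M c :=
          Finset.mem_filter.2 ⟨hzc, t', ht's, ht'a, ht'c, hzt'⟩
        have hzm : z ≤ m c := hm2 c hc z hzM
        have hzy : z ≠ m c' := by
          intro h
          apply hcc'
          exact hmdisj c hc c' hc' (le_antisymm hle (h ▸ hzm)) |>.symm ▸ rfl
        exact ht'a hzt' hyt' hzy (hzm.trans hle)
      have hbig : IsAntichain (· ≤ ·) ((insert a A : Finset α) : Set α) := by
        rw [Finset.coe_insert]
        refine hAanti.insert ?_ ?_
        · intro b hb _ hba
          obtain ⟨c, hc, rfl⟩ := Finset.mem_image.1 (by exact_mod_cast hb : b ∈ A)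
          exact hcase c hc hba
        · intro b hb hne hab
          have hbs : b ∈ s := hs'sub (hAs' (by exact_mod_cast hb))
          have hlt := lt_of_le_of_ne hab (fun h => haA (h ▸ (by exact_mod_cast hb)))
          exact lt_irrefl _ (lt_of_lt_of_le hlt (hamax hbs hlt.le))
      have hbigcard : k + 1 ≤ fwidth s := by
        have hsub : insert a A ⊆ s := by
          intro x hx
          rcases Finset.mem_insert.1 hx with rfl | hx
          · exact ha
          · exact hs'sub (hAs' hx)
        have := card_le_fwidth hsub hbig
        rwa [Finset.card_insert_of_notMem haA, hAcard] at this
      refine ⟨insert {a} C, ?_, ?_, ?_, ?_⟩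
      · calc (insert {a} C).card ≤ C.card + 1 := Finset.card_insert_le _ _
          _ = k + 1 := by rw [hCk]
          _ ≤ fwidth s := hbigcard
      · intro c hc
        rcases Finset.mem_insert.1 hc with rfl | hc
        · exact ⟨Set.Subsingleton.isChain (by simp), by simpa using ha⟩
        · exact ⟨(hCchain c hc).1, (hCchain c hc).2.trans hs'sub⟩
      · intro x hx
        rcases eq_or_ne x a with h | hne
        · exact ⟨{a}, Finset.mem_insert_self _ _, by simp [h]⟩
        · obtain ⟨c, hc, hxc⟩ := hCcover x (Finset.mem_erase.2 ⟨hne, hx⟩)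
          exact ⟨c, Finset.mem_insert_of_mem hc, hxc⟩
      · rw [Finset.coe_insert]
        refine hCdisj.insert ?_
        intro c hc _
        rw [Finset.disjoint_left]
        intro x hxa hxc
        have hx : x = a := by simpa using hxa
        subst hx
        exact has' ((hCchain c hc).2 hxc)

end Dilworth2

section Pieces
open scoped Classical

/-- Below a non-dominated element there is a sup-irreducible not dominated. -/
lemma exists_supIrred_le {L : Type*} [Lattice L] [Finite L] (y : L) :
    ∀ x : L, ¬ x ≤ y → ∃ p : L, SupIrred p ∧ p ≤ x ∧ ¬ p ≤ y := by
  have wf : WellFoundedLT L := Finite.to_wellFoundedLT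
  intro x
  induction x using WellFoundedLT.induction with
  | _ x ih =>
  intro h
  by_cases hx : SupIrred x
  · exact ⟨x, hx, le_rfl, h⟩
  · rw [not_supIrred] at hx
    rcases hx with hmin | ⟨b, c, rfl, hb, hc⟩
    · exact absurd ((hmin (inf_le_left : x ⊓ y ≤ x)).trans inf_le_right) h
    · by_cases hby : b ≤ y
      · obtain ⟨p, h1, h2, h3⟩ := ih c hc (fun hcy => h (sup_le hby hcy))
        exact ⟨p, h1, h2.trans le_sup_right, h3⟩
      · obtain ⟨p, h1, h2, h3⟩ := ih b hb hby
        exact ⟨p, h1, h2.trans le_sup_left, h3⟩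

/-- Every finite poset order-embeds into some power of ℕ. -/
lemma exists_any_orderEmbedding (L : Type) [PartialOrder L] [Fintype L] :
    Nonempty (L ↪o (Fin (Fintype.card L) → ℕ)) := by
  refine ⟨OrderEmbedding.ofMapLEIff
    (fun x j => if (Fintype.equivFin L).symm j ≤ x then 1 else 0) ?_⟩
  intro x y
  constructor
  · intro hle
    have := hle ((Fintype.equivFin L) x)
    simp only [Equiv.symm_apply_apply, le_refl, if_true] at this
    by_contra hxy
    rw [if_neg hxy] at this
    omega
  · intro hxy j
    by_cases h : (Fintype.equivFin L).symm j ≤ x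
    · simp [h, h.trans hxy]
    · simp only [if_neg h]
      positivity

/-- From the order-dimension bound we get an embedding into `Fin n → ℕ`. -/
lemma exists_orderEmbedding_of_orderDim_le (L : Type) [PartialOrder L] [Fintype L]
    (n : ℕ) (h : orderDim L ≤ n) : Nonempty (L ↪o (Fin n → ℕ)) := by
  have hne : {m : ℕ | Nonempty (L ↪o (Fin m → ℕ))}.Nonempty :=
    ⟨Fintype.card L, exists_any_orderEmbedding L⟩
  have hmem := Nat.sInf_mem hne
  obtain ⟨e⟩ := hmem
  have hmn : sInf {m : ℕ | Nonempty (L ↪o (Fin m → ℕ))} ≤ n := h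
  refine ⟨OrderEmbedding.ofMapLEIff
    (fun x j => if hj : (j : ℕ) < sInf {m : ℕ | Nonempty (L ↪o (Fin m → ℕ))}
      then e x ⟨j, hj⟩ else 0) ?_⟩
  intro x y
  constructor
  · intro hle
    rw [← e.le_iff_le]
    intro j'
    have := hle ⟨(j' : ℕ), lt_of_lt_of_le j'.2 hmn⟩
    simpa [j'.2] using this
  · intro hxy j
    by_cases hj : (j : ℕ) < sInf {m : ℕ | Nonempty (L ↪o (Fin m → ℕ))}
    · simpa [hj] using e.monotone hxy ⟨j, hj⟩
    · simp [hj]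

/-- Antichains of sup-irreducibles are small in a lattice of dimension ≤ n. -/
lemma supIrred_antichain_card_le {L : Type*} [DistribLattice L] [Fintype L] {n : ℕ}
    (g : L ↪o (Fin n → ℕ)) (t : Finset L) (ht : ∀ p ∈ t, SupIrred p)
    (hanti : IsAntichain (· ≤ ·) (t : Set L)) : t.card ≤ n := by
  rcases t.eq_empty_or_nonempty with rfl | htne
  · simp
  have : Nonempty L := ⟨htne.choose⟩
  have key : ∀ p ∈ t, ∃ j : Fin n, ∀ q ∈ t, q ≠ p → g q j < g p j := by
    intro p hp
    obtain ⟨b, hb⟩ := not_isMin_iff.1 (ht p hp).1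
    have hSne : (univ.filter (fun x : L => ¬ p ≤ x)).Nonempty :=
      ⟨b, Finset.mem_filter.2 ⟨Finset.mem_univ b, fun hpb => absurd (le_antisymm hpb hb.le)
        (ne_of_gt hb)⟩⟩
    set sp := (univ.filter (fun x : L => ¬ p ≤ x)).sup' hSne id with hspdef
    have hnps : ¬ p ≤ sp := by
      apply Finset.sup'_induction hSne id (p := fun z => ¬ p ≤ z)
      · intro a₁ h₁ a₂ h₂ hsup
        rcases (ht p hp).supPrime.2 hsup with h | h
        · exact h₁ h
        · exact h₂ h
      · intro z hz
        exact (Finset.mem_filter.1 hz).2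
    have : ¬ g p ≤ g sp := fun hc => hnps (g.le_iff_le.1 hc)
    rw [Pi.le_def] at this
    push_neg at this
    obtain ⟨j, hj⟩ := this
    refine ⟨j, fun q hq hqp => ?_⟩
    have hpq : ¬ p ≤ q := hanti hp hq (Ne.symm hqp)
    have hqmem : q ∈ univ.filter (fun x : L => ¬ p ≤ x) := by
      simp only [Finset.mem_filter, Finset.mem_univ, true_and]
      exact hpq
    have hqsp : q ≤ sp := Finset.le_sup' id hqmem
    exact lt_of_le_of_lt (g.monotone hqsp j) hj
  obtain ⟨p0, hp0⟩ := htne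
  obtain ⟨j0, -⟩ := key p0 hp0
  have : Nonempty (Fin n) := ⟨j0⟩
  choose! w hw using key
  have : t.card ≤ (Finset.univ : Finset (Fin n)).card := by
    refine Finset.card_le_card_of_injOn w (fun _ _ => Finset.mem_univ _) ?_
    intro p hp q hq hwpq
    by_contra hne
    exact absurd ((hw p hp q hq (Ne.symm hne)).trans (hwpq ▸ hw q hq p hp hne)) (lt_irrefl _)
  simpa using this

end Pieces



/-- A finite distributive lattice of order dimension at most `n` admits an injective
lattice homomorphism into `Fin n → ℕ`. -/
lemma exists_latticeHom_injective (L : Type*) [DistribLattice L] [Fintype L] {n : ℕ}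
    (g : L ↪o (Fin n → ℕ)) :
    ∃ G : LatticeHom L (Fin n → ℕ), Function.Injective G := by
  classical
  set s : Finset L := univ.filter (fun p => SupIrred p) with hsdef
  have hsmem : ∀ p, p ∈ s ↔ SupIrred p := by
    intro p; simp [hsdef]
  have hw : fwidth s ≤ n := by
    obtain ⟨t, hts, hta, htc⟩ := exists_fwidth_antichain s
    rw [← htc]
    exact supIrred_antichain_card_le g t (fun p hp => (hsmem p).1 (hts hp)) hta
  obtain ⟨C, hC1, hC2, hC3, -⟩ := dilworth s
  -- enumerate the chains by Fin n
  have hlen : C.toList.length ≤ n := by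
    rw [Finset.length_toList]; omega
  set c : Fin n → Finset L := fun j =>
    if h : (j : ℕ) < C.toList.length then C.toList.get ⟨j, h⟩ else ∅ with hcdef
  have hcget : ∀ (j : Fin n) (h : (j : ℕ) < C.toList.length),
      c j = C.toList.get ⟨j, h⟩ := by
    intro j h; rw [hcdef]; exact dif_pos h
  have hcC : ∀ j, c j = ∅ ∨ c j ∈ C := by
    intro j
    by_cases h : (j : ℕ) < C.toList.length
    · right
      rw [hcget j h]
      exact Finset.mem_toList.1 (List.get_mem _ _)
    · left
      rw [hcdef]; exact dif_neg h
  have hchain : ∀ j, IsChain (· ≤ ·) ((c j : Finset L) : Set L) := by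
    intro j
    rcases hcC j with h | h
    · rw [h]; simp only [Finset.coe_empty]; exact Set.pairwise_empty _
    · exact (hC2 _ h).1
  have hcirr : ∀ j, ∀ p ∈ c j, SupIrred p := by
    intro j p hp
    rcases hcC j with h | h
    · rw [h] at hp; exact absurd hp (Finset.notMem_empty p)
    · exact (hsmem p).1 ((hC2 _ h).2 hp)
  have hcover : ∀ p : L, SupIrred p → ∃ j, p ∈ c j := by
    intro p hp
    obtain ⟨ch, hch, hpch⟩ := hC3 p ((hsmem p).2 hp)
    obtain ⟨i, hi⟩ := List.mem_iff_get.1 (Finset.mem_toList.2 hch)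
    refine ⟨⟨(i : ℕ), lt_of_lt_of_le i.2 hlen⟩, ?_⟩
    rw [hcget ⟨(i : ℕ), lt_of_lt_of_le i.2 hlen⟩ i.2]
    have : (⟨((⟨(i : ℕ), lt_of_lt_of_le i.2 hlen⟩ : Fin n) : ℕ), i.2⟩ : Fin C.toList.length) = i := by
      ext; rfl
    rw [this, hi]
    exact hpch
  -- comparability of the down-filters along a chain
  have hcomp : ∀ (j : Fin n) (x y : L),
      (c j).filter (fun p => p ≤ x) ⊆ (c j).filter (fun p => p ≤ y) ∨
      (c j).filter (fun p => p ≤ y) ⊆ (c j).filter (fun p => p ≤ x) := by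
    intro j x y
    by_contra hcon
    push_neg at hcon
    obtain ⟨h1, h2⟩ := hcon
    obtain ⟨p, hp, hp2⟩ := Finset.not_subset.1 h1
    obtain ⟨q, hq, hq2⟩ := Finset.not_subset.1 h2
    obtain ⟨hpc, hpx⟩ := Finset.mem_filter.1 hp
    obtain ⟨hqc, hqy⟩ := Finset.mem_filter.1 hq
    have hpy : ¬ p ≤ y := fun h => hp2 (Finset.mem_filter.2 ⟨hpc, h⟩)
    have hqx : ¬ q ≤ x := fun h => hq2 (Finset.mem_filter.2 ⟨hqc, h⟩)
    have hpq : p ≠ q := fun h => hpy (h ▸ hqy)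
    rcases hchain j hpc hqc hpq with h | h
    · exact hpy (h.trans hqy)
    · exact hqx (h.trans hpx)
  refine ⟨⟨⟨fun x j => ((c j).filter (fun p => p ≤ x)).card, ?_⟩, ?_⟩, ?_⟩
  · -- map_sup
    intro x y
    funext j
    have hset : (c j).filter (fun p => p ≤ x ⊔ y) =
        (c j).filter (fun p => p ≤ x) ∪ (c j).filter (fun p => p ≤ y) := by
      ext p
      simp only [Finset.mem_filter, Finset.mem_union]
      constructor
      · rintro ⟨hpc, hpxy⟩
        rcases ((hcirr j p hpc).supPrime).2 hpxy with h | h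
        · exact Or.inl ⟨hpc, h⟩
        · exact Or.inr ⟨hpc, h⟩
      · rintro (⟨hpc, h⟩ | ⟨hpc, h⟩)
        · exact ⟨hpc, h.trans le_sup_left⟩
        · exact ⟨hpc, h.trans le_sup_right⟩
    show ((c j).filter (fun p => p ≤ x ⊔ y)).card = max (((c j).filter (fun p => p ≤ x)).card)
      (((c j).filter (fun p => p ≤ y)).card)
    rw [hset]
    rcases hcomp j x y with h | h
    · rw [Finset.union_eq_right.2 h, max_eq_right (Finset.card_le_card h)]
    · rw [Finset.union_eq_left.2 h, max_eq_left (Finset.card_le_card h)]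
  · -- map_inf
    intro x y
    funext j
    have hset : (c j).filter (fun p => p ≤ x ⊓ y) =
        (c j).filter (fun p => p ≤ x) ∩ (c j).filter (fun p => p ≤ y) := by
      ext p
      simp only [Finset.mem_filter, Finset.mem_inter, le_inf_iff]
      tauto
    show ((c j).filter (fun p => p ≤ x ⊓ y)).card = min (((c j).filter (fun p => p ≤ x)).card)
      (((c j).filter (fun p => p ≤ y)).card)
    rw [hset]
    rcases hcomp j x y with h | h
    · rw [Finset.inter_eq_left.2 h, min_eq_left (Finset.card_le_card h)]
    · rw [Finset.inter_eq_right.2 h, min_eq_right (Finset.card_le_card h)]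
  · -- injective
    have key : ∀ u v : L, (∀ j, ((c j).filter (fun p => p ≤ u)).card =
        ((c j).filter (fun p => p ≤ v)).card) → u ≤ v := by
      intro u v h
      by_contra hne
      obtain ⟨p, hpirr, hpu, hpv⟩ := exists_supIrred_le v u hne
      obtain ⟨j, hpj⟩ := hcover p hpirr
      have hpmem : p ∈ (c j).filter (fun p => p ≤ u) := Finset.mem_filter.2 ⟨hpj, hpu⟩
      have hsub : (c j).filter (fun p => p ≤ v) ⊆ (c j).filter (fun p => p ≤ u) := by
        rcases hcomp j u v with hss | hss
        · exact absurd (Finset.mem_filter.1 (hss hpmem)).2 hpv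
        · exact hss
      have : ((c j).filter (fun p => p ≤ v)).card < ((c j).filter (fun p => p ≤ u)).card := by
        refine Finset.card_lt_card ⟨hsub, fun hc => ?_⟩
        exact hpv (Finset.mem_filter.1 (hc hpmem)).2
      rw [h j] at this
      exact lt_irrefl _ this
    intro u v huv
    have h1 : ∀ j, ((c j).filter (fun p => p ≤ u)).card = ((c j).filter (fun p => p ≤ v)).card :=
      fun j => congrFun huv j
    exact le_antisymm (key u v h1) (key v u (fun j => (h1 j).symm))


/-- Let `n ≥ 1`, let `D` be an `n`-dimensional grid (a product of `n`
nontrivial finite chains) and let `L` be a finite distributive lattice of order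
dimension at most `n` containing `D` as a sublattice. Then there is a retraction
`L → D`, i.e., a lattice homomorphism fixing `D` pointwise. -/
theorem statement16 (n : ℕ) (hn : 1 ≤ n) (k : Fin n → ℕ)
    (L : Type) [DistribLattice L] [Fintype L] (hdim : orderDim L ≤ n)
    (ι : LatticeHom (∀ i, Fin (k i + 2)) L) (hι : Function.Injective ι) :
    ∃ f : LatticeHom L (∀ i, Fin (k i + 2)), ∀ d, f (ι d) = d := by
  classical
  obtain ⟨g⟩ := exists_orderEmbedding_of_orderDim_le L n hdim
  obtain ⟨G, hG⟩ := exists_latticeHom_injective L g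
  -- the composite embedding of the grid
  set H : (∀ i, Fin (k i + 2)) → (Fin n → ℕ) := fun d => G (ι d) with hHdef
  have hHmono : Monotone H := by
    intro d e hde
    have h1 : ι d ≤ ι e := by
      rw [← sup_eq_right, ← map_sup, sup_eq_right.2 hde]
    rw [hHdef]
    dsimp only
    rw [← sup_eq_right, ← map_sup, sup_eq_right.2 h1]
  have hHinj : Function.Injective H := fun d e hde => hι (hG hde)
  have hHrefl : ∀ d e, H d ≤ H e → d ≤ e := by
    intro d e hde
    have h1 : H (d ⊓ e) = H d := by
      have : G (ι (d ⊓ e)) = G (ι d) ⊓ G (ι e) := by rw [map_inf, map_inf]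
      rw [hHdef] at hde ⊢
      simp only [this]
      exact inf_eq_left.2 hde
    exact inf_eq_left.1 (hHinj h1)
  -- special elements of the grid
  set A : (i : Fin n) → Fin (k i + 2) → (∀ i', Fin (k i' + 2)) :=
    fun i a => Function.update (fun i' => Fin.last (k i' + 1)) i a with hAdef
  set B : (i : Fin n) → Fin (k i + 2) → (∀ i', Fin (k i' + 2)) :=
    fun i a => Function.update (fun i' => (0 : Fin (k i' + 2))) i a with hBdef
  have hBle : ∀ (i : Fin n) (a : Fin (k i + 2)) (d : ∀ i', Fin (k i' + 2)),
      a ≤ d i → B i a ≤ d := by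
    intro i a d ha i'
    rcases eq_or_ne i' i with rfl | hne
    · rw [hBdef]; simpa using ha
    · rw [hBdef]; simp only [Function.update_of_ne hne]; exact Fin.zero_le _
  have hAle : ∀ (i : Fin n) (a : Fin (k i + 2)) (d : ∀ i', Fin (k i' + 2)),
      d i ≤ a → d ≤ A i a := by
    intro i a d ha i'
    rcases eq_or_ne i' i with rfl | hne
    · rw [hAdef]; simpa using ha
    · rw [hAdef]; simp only [Function.update_of_ne hne]; exact Fin.le_last _
  have hBA : ∀ (i : Fin n) (a a' : Fin (k i + 2)), B i a ≤ A i a' → a ≤ a' := by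
    intro i a a' hle
    have := hle i
    rw [hAdef, hBdef] at this
    simpa using this
  have hcross : ∀ (i i' : Fin n) (a : Fin (k i + 2)) (a' : Fin (k i' + 2)),
      i ≠ i' → B i a ≤ A i' a' := by
    intro i i' a a' hne j
    rcases eq_or_ne j i with rfl | hji
    · rw [hBdef, hAdef]
      simp only [Function.update_self, Function.update_of_ne hne]
      exact Fin.le_last _
    · rw [hBdef]
      simp only [Function.update_of_ne hji]
      exact Fin.zero_le _
  have hsuccle : ∀ (m : ℕ) (c : Fin (m + 1)), ¬ (c.succ : Fin (m + 2)) ≤ c.castSucc := by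
    intro m c hle
    rw [Fin.le_def, Fin.val_succ, Fin.coe_castSucc] at hle
    omega
  -- witnesses
  have hwitex : ∀ i : Fin n, ∃ j : Fin n, ∃ c : Fin (k i + 1),
      H (A i c.castSucc) j < H (B i c.succ) j := by
    intro i
    have c0 : Fin (k i + 1) := ⟨0, Nat.succ_pos _⟩
    have hnle : ¬ B i c0.succ ≤ A i c0.castSucc := fun hc =>
      hsuccle (k i) c0 (hBA i _ _ hc)
    have hHnle : ¬ H (B i c0.succ) ≤ H (A i c0.castSucc) := fun hc => hnle (hHrefl _ _ hc)
    rw [Pi.le_def] at hHnle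
    push_neg at hHnle
    obtain ⟨j, hj⟩ := hHnle
    exact ⟨j, c0, hj⟩
  have hwituniq : ∀ (i i' j : Fin n),
      (∃ c : Fin (k i + 1), H (A i c.castSucc) j < H (B i c.succ) j) →
      (∃ c : Fin (k i' + 1), H (A i' c.castSucc) j < H (B i' c.succ) j) → i = i' := by
    intro i i' j ⟨c, hc⟩ ⟨c', hc'⟩
    by_contra hne
    have h1 : H (B i c.succ) j ≤ H (A i' c'.castSucc) j := hHmono (hcross i i' _ _ hne) j
    have h2 : H (B i' c'.succ) j ≤ H (A i c.castSucc) j := hHmono (hcross i' i _ _ (Ne.symm hne)) j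
    exact absurd ((hc.trans_le h1).trans (hc'.trans_le h2)) (lt_irrefl _)
  choose σ hσ using hwitex
  have hσinj : Function.Injective σ := by
    intro i i' hii'
    exact hwituniq i i' (σ i) (hσ i) (hii' ▸ hσ i')
  have hσsurj : Function.Surjective σ := Finite.surjective_of_injective hσinj
  have huniq : ∀ (i j : Fin n),
      (∃ c : Fin (k i + 1), H (A i c.castSucc) j < H (B i c.succ) j) → j = σ i := by
    intro i j hw
    obtain ⟨i'', hi''⟩ := hσsurj j
    rw [← hi'']
    rw [hwituniq i i'' j hw (hi'' ▸ hσ i'')]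
  have hstep : ∀ (i : Fin n) (c : Fin (k i + 1)),
      H (A i c.castSucc) (σ i) < H (B i c.succ) (σ i) := by
    intro i c
    have hnle : ¬ B i c.succ ≤ A i c.castSucc := fun hc => hsuccle (k i) c (hBA i _ _ hc)
    have hHnle : ¬ H (B i c.succ) ≤ H (A i c.castSucc) := fun hc => hnle (hHrefl _ _ hc)
    rw [Pi.le_def] at hHnle
    push_neg at hHnle
    obtain ⟨j, hj⟩ := hHnle
    rwa [huniq i j ⟨c, hj⟩] at hj
  -- membership characterisation
  have hchar : ∀ (i : Fin n) (a : Fin (k i + 2)) (d : ∀ i', Fin (k i' + 2)),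
      H (B i a) (σ i) ≤ H d (σ i) ↔ a ≤ d i := by
    intro i a d
    constructor
    · intro hle
      by_contra hna
      push_neg at hna
      have ha0 : a ≠ 0 := by
        intro h
        rw [h] at hna
        exact absurd (Fin.zero_le _) (not_le_of_gt hna)
      obtain ⟨c, rfl⟩ := Fin.eq_succ_of_ne_zero ha0
      have hdc : d i ≤ c.castSucc := by
        rw [Fin.le_def, Fin.coe_castSucc]
        rw [Fin.lt_def, Fin.val_succ] at hna
        omega
      have h1 : H d (σ i) ≤ H (A i c.castSucc) (σ i) := hHmono (hAle i _ d hdc) (σ i)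
      exact lt_irrefl _ (lt_of_le_of_lt (hle.trans h1) (hstep i c))
    · intro ha
      exact hHmono (hBle i a d ha) (σ i)
  -- the retraction, coordinatewise by counting thresholds
  set θ : (i : Fin n) → ℕ → Fin (k i + 2) := fun i m =>
    (insert (0 : Fin (k i + 2)) (univ.filter (fun a => H (B i a) (σ i) ≤ m))).max'
      ⟨0, Finset.mem_insert_self _ _⟩ with hθdef
  have hθmono : ∀ i, Monotone (θ i) := by
    intro i m m' hmm'
    apply Finset.max'_subset
    apply Finset.insert_subset_insert
    intro a ha
    rw [Finset.mem_filter] at ha ⊢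
    exact ⟨ha.1, ha.2.trans hmm'⟩
  have hθd : ∀ (i : Fin n) (d : ∀ i', Fin (k i' + 2)), θ i (H d (σ i)) = d i := by
    intro i d
    apply le_antisymm
    · apply Finset.max'_le
      intro b hb
      rcases Finset.mem_insert.1 hb with rfl | hb
      · exact Fin.zero_le _
      · exact (hchar i b d).1 (Finset.mem_filter.1 hb).2
    · apply Finset.le_max'
      exact Finset.mem_insert_of_mem (Finset.mem_filter.2
        ⟨Finset.mem_univ _, (hchar i (d i) d).2 le_rfl⟩)
  refine ⟨⟨⟨fun x i => θ i (G x (σ i)), ?_⟩, ?_⟩, ?_⟩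
  · intro x y
    funext i
    show θ i (G (x ⊔ y) (σ i)) = θ i (G x (σ i)) ⊔ θ i (G y (σ i))
    rw [map_sup]
    exact (hθmono i).map_max
  · intro x y
    funext i
    show θ i (G (x ⊓ y) (σ i)) = θ i (G x (σ i)) ⊓ θ i (G y (σ i))
    rw [map_inf]
    exact (hθmono i).map_min
  · intro d
    funext i
    exact hθd i d
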